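/- Let μ be a Γ-quasi-invariant probability measure on the compactification of a hyperbolic group Γ, s ∈ [1/2, 1], π_s the s-density representation, and E a (Γ, s, μ)-conformal conditional expectation, meaning E(π_s(g)ψ) = π_s*(g)E(ψ) on L²(μ) for all g ∈ Γ, where π_s* is the L²(μ)-adjoint. Then for every symmetric nonnegative finitely supported f on Γ (f^∨ = f), the operator π_s(f) on L²(μ) satisfies ‖π_s(f)‖_{op} ≤ ‖π_s(f)𝟏‖_{L^∞(μ)}. -/

import Mathlib

open Filter MeasureTheory
open scoped RealInnerProductSpace ENNReal

/-- An invariant metric on a discrete group with uniformly locally finite balls. -/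
structure InvMetric (Γ : Type*) [Group Γ] where
  d : Γ → Γ → ℝ
  symm : ∀ g h, d g h = d h g
  triangle : ∀ g h k, d g k ≤ d g h + d h k
  refl : ∀ g, d g g = 0
  eq_of_dist_eq_zero : ∀ g h, d g h = 0 → g = h
  invariant : ∀ g x y, d (g * x) (g * y) = d x y
  finiteBalls : ∀ r : ℝ, {g : Γ | d g 1 ≤ r}.Finite

variable {Γ : Type*} [Group Γ]

/-- The growth exponent `δ = limsup_r (1/r) log |B_r|`. -/
noncomputable def growthExp (M : InvMetric Γ) : ℝ :=
  limsup (fun r : ℝ => Real.log (Nat.card {g : Γ | M.d g 1 ≤ r}) / r) atTop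

/-- The critical exponent of a nonnegative function: the abscissa of convergence of
the Poincaré series `∑_g e^{-t d(g,e)} f(g)` (infimum over nonnegative `t`). -/
noncomputable def critExp (M : InvMetric Γ) (f : Γ → ℝ) : ℝ :=
  sInf {t : ℝ | 0 ≤ t ∧ Summable fun g : Γ => Real.exp (-t * M.d g 1) * f g}

/-- The operator norm of `λ(f)` on `ℓ²(Γ)` for the left regular representation,
realized as the supremum of `|⟨λ(f)u, w⟩|` over finitely supported `u, w` of
`ℓ²`-norm at most one. -/
noncomputable def regNorm (f : Γ →₀ ℝ) : ℝ :=
  sSup {c : ℝ | ∃ u w : Γ →₀ ℝ,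
    (∑ x ∈ u.support, u x ^ 2) ≤ 1 ∧ (∑ x ∈ w.support, w x ^ 2) ≤ 1 ∧
    c = |∑ g ∈ f.support, ∑ x ∈ w.support, f g * u (g⁻¹ * x) * w x|}

/-- `π(f) = ∑_g f(g) π(g)` as a bounded operator. -/
noncomputable def opOf {H : Type*} [NormedAddCommGroup H] [InnerProductSpace ℝ H]
    (π : Γ →* (H ≃ₗᵢ[ℝ] H)) (f : Γ →₀ ℝ) : H →L[ℝ] H :=
  ∑ g ∈ f.support, f g • ((π g).toContinuousLinearEquiv : H →L[ℝ] H)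

/-- The Gromov product `(x,y)_o`. -/
noncomputable def gromov (M : InvMetric Γ) (x y o : Γ) : ℝ :=
  (M.d x o + M.d y o - M.d x y) / 2

/-- Gromov hyperbolicity. -/
def IsHyperbolic (M : InvMetric Γ) : Prop :=
  ∃ C : ℝ, ∀ x y z o : Γ, min (gromov M x z o) (gromov M z y o) - C ≤ gromov M x y o

/-- Strong hyperbolicity in the sense of Mineyev--Yu / Nica--Spakula. -/
def IsStronglyHyperbolic (M : InvMetric Γ) : Prop :=
  ∃ ε > (0 : ℝ), ∀ x y z o : Γ,
    Real.exp (-ε * gromov M x y o) ≤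
      Real.exp (-ε * gromov M x z o) + Real.exp (-ε * gromov M z y o)

/-- Roughly geodesic. -/
def IsRoughlyGeodesic (M : InvMetric Γ) : Prop :=
  ∃ C : ℝ, 0 ≤ C ∧ ∀ x y : Γ, ∀ t : ℝ, 0 ≤ t → t ≤ M.d x y →
    ∃ z : Γ, |M.d x z - t| ≤ C ∧ |M.d z y - (M.d x y - t)| ≤ C

/-- `π` has almost invariant vectors (equivalently, `1 ≺ π`). -/
def HasAlmostInvariantVectors {H : Type*} [NormedAddCommGroup H]
    [InnerProductSpace ℝ H] (π : Γ →* (H ≃ₗᵢ[ℝ] H)) : Prop :=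
  ∀ (S : Finset Γ) (ε : ℝ), 0 < ε → ∃ w : H, ‖w‖ = 1 ∧ ∀ g ∈ S, ‖π g w - w‖ < ε

/-- The ball average `Avr_r(π) = (1/|B_r|) ∑_{g∈B_r} π(g)`. -/
noncomputable def ballAvg {H : Type*} [NormedAddCommGroup H] [InnerProductSpace ℝ H]
    (M : InvMetric Γ) (π : Γ →* (H ≃ₗᵢ[ℝ] H)) (r : ℝ) : H →L[ℝ] H :=
  (Nat.card {g : Γ | M.d g 1 ≤ r} : ℝ)⁻¹ •
    ∑ g ∈ (M.finiteBalls r).toFinset, ((π g).toContinuousLinearEquiv : H →L[ℝ] H)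


private lemma cs_aux {ι : Type*} (s : Finset ι) (a u : ι → ℝ) (ha : ∀ i ∈ s, 0 ≤ a i) (W : ℝ) :
    |(∑ i ∈ s, a i * u i) * W| ≤
      Real.sqrt (∑ i ∈ s, a i * u i ^ 2) * Real.sqrt ((∑ i ∈ s, a i) * W ^ 2) := by
  have key := Finset.sum_mul_sq_le_sq_mul_sq s (fun i => Real.sqrt (a i) * u i)
    (fun i => Real.sqrt (a i) * W)
  have s1 : ∑ i ∈ s, (Real.sqrt (a i) * u i) * (Real.sqrt (a i) * W)
      = (∑ i ∈ s, a i * u i) * W := by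
    rw [Finset.sum_mul]
    refine Finset.sum_congr rfl fun i hi => ?_
    rw [mul_mul_mul_comm, Real.mul_self_sqrt (ha i hi)]
    ring
  have s2 : ∑ i ∈ s, (Real.sqrt (a i) * u i) ^ 2 = ∑ i ∈ s, a i * u i ^ 2 :=
    Finset.sum_congr rfl fun i hi => by rw [mul_pow, Real.sq_sqrt (ha i hi)]
  have s3 : ∑ i ∈ s, (Real.sqrt (a i) * W) ^ 2 = (∑ i ∈ s, a i) * W ^ 2 := by
    rw [Finset.sum_mul]
    exact Finset.sum_congr rfl fun i hi => by rw [mul_pow, Real.sq_sqrt (ha i hi)]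
  rw [s1, s2, s3] at key
  rw [show |(∑ i ∈ s, a i * u i) * W| = Real.sqrt (((∑ i ∈ s, a i * u i) * W) ^ 2) from
    (Real.sqrt_sq_eq_abs _).symm,
    ← Real.sqrt_mul (Finset.sum_nonneg fun i hi => mul_nonneg (ha i hi) (sq_nonneg _))]
  exact Real.sqrt_le_sqrt key

private lemma integrable_of_bounds {X : Type*} [MeasurableSpace X] {μ : Measure X}
    [IsFiniteMeasure μ] {h : X → ℝ} (hm : AEStronglyMeasurable h μ) {D : ℝ}
    (h0 : ∀ x, 0 ≤ h x) (hD : ∀ x, h x ≤ D) : Integrable h μ :=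
  memLp_one_iff_integrable.1 <| MemLp.of_bound hm D <| ae_of_all _ fun x => by
    rw [Real.norm_eq_abs, abs_of_nonneg (h0 x)]; exact hD x

private lemma ofReal_sq (t : ℝ) : ENNReal.ofReal (t ^ 2) = (‖t‖₊ : ℝ≥0∞) ^ (2:ℝ) := by
  rw [← ENNReal.ofReal_coe_nnreal, coe_nnnorm, ENNReal.ofReal_rpow_of_nonneg (norm_nonneg t) (by norm_num)]
  congr 1
  rw [show (2:ℝ) = ((2:ℕ):ℝ) by norm_num, Real.rpow_natCast, Real.norm_eq_abs, sq_abs]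

private theorem aux_bound {Γ : Type*} [Group Γ] {X : Type*} [MeasurableSpace X] [MulAction Γ X]
    (hmsmul : ∀ g : Γ, Measurable fun x : X => g • x)
    (μ : Measure X) [IsProbabilityMeasure μ]
    (B : Γ → X → ℝ) (hBmeas : ∀ g, Measurable (B g)) (hBpos : ∀ g x, 0 < B g x)
    (C : Γ → ℝ) (hBle : ∀ g x, B g x ≤ C g)
    (E : (X → ℝ) →ₗ[ℝ] (X → ℝ))
    (hEinfty : ∀ ψ : X → ℝ, eLpNorm (E ψ) ⊤ μ ≤ eLpNorm ψ ⊤ μ)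
    (hconf : ∀ g : Γ, ∀ χ : X → ℝ, Measurable χ → MemLp χ 2 μ →
      ∫ x, E (B g) x * χ x ∂μ = ∫ x, B g x * χ (g⁻¹ • x) ∂μ)
    (f : Γ →₀ ℝ) (hf : ∀ g, 0 ≤ f g)
    (v w : X → ℝ) (hv : Measurable v) (hw : Measurable w)
    (hv2 : MemLp v 2 μ) (hw2 : MemLp w 2 μ) :
    |∫ x, (∑ g ∈ f.support, f g * B g x * v (g⁻¹ • x)) * w x ∂μ| ≤
      (eLpNorm (fun x => ∑ g ∈ f.support, f g * B g x) ⊤ μ).toReal *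
        (eLpNorm v 2 μ).toReal * (eLpNorm w 2 μ).toReal := by
  classical
  set KE := eLpNorm (fun x => ∑ g ∈ f.support, f g * B g x) ⊤ μ with hKE
  have hA0 : ∀ x, 0 ≤ ∑ g ∈ f.support, f g * B g x :=
    fun x => Finset.sum_nonneg fun g _ => mul_nonneg (hf g) (hBpos g x).le
  have hKEne : KE ≠ ⊤ := by
    rw [hKE, eLpNorm_exponent_top]
    refine ne_top_of_le_ne_top ENNReal.ofReal_ne_top
      (eLpNormEssSup_le_of_ae_bound (C := ∑ g ∈ f.support, f g * C g) (ae_of_all _ fun x => ?_))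
    rw [Real.norm_eq_abs, abs_of_nonneg (hA0 x)]
    exact Finset.sum_le_sum fun g _ => mul_le_mul_of_nonneg_left (hBle g x) (hf g)
  have hvg : ∀ g : Γ, Measurable fun x => v (g⁻¹ • x) := fun g => hv.comp (hmsmul g⁻¹)
  have hPmeas : Measurable fun x => ∑ g ∈ f.support, f g * B g x * v (g⁻¹ • x) ^ 2 :=
    Finset.measurable_sum _ fun g _ => (measurable_const.mul (hBmeas g)).mul ((hvg g).pow_const 2)
  have hAmeas : Measurable fun x => ∑ g ∈ f.support, f g * B g x :=
    Finset.measurable_sum _ fun g _ => measurable_const.mul (hBmeas g)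
  have hχmeas : ∀ n : ℕ, Measurable fun x => min (v x ^ 2) (n : ℝ) :=
    fun n => (hv.pow_const 2).min measurable_const
  have hχ0 : ∀ (n : ℕ) (x : X), 0 ≤ min (v x ^ 2) (n : ℝ) :=
    fun n x => le_min (sq_nonneg _) (Nat.cast_nonneg n)
  have hχ2 : ∀ n : ℕ, MemLp (fun x => min (v x ^ 2) (n : ℝ)) 2 μ := fun n =>
    MemLp.of_bound (hχmeas n).aestronglyMeasurable (n : ℝ) (ae_of_all _ fun x => by
      rw [Real.norm_eq_abs, abs_of_nonneg (hχ0 n x)]; exact min_le_right _ _)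
  have hBint : ∀ g : Γ, Integrable (B g) μ := fun g =>
    integrable_of_bounds (hBmeas g).aestronglyMeasurable (fun x => (hBpos g x).le) (hBle g)
  have hEBint : ∀ g : Γ, Integrable (E (B g)) μ := by
    intro g
    by_contra hcon
    have h0 : ∫ x, E (B g) x ∂μ = 0 := integral_undef hcon
    have h1 := hconf g (fun _ => 1) measurable_const (memLp_const 1)
    simp only [mul_one] at h1
    have hpos : 0 < ∫ x, B g x ∂μ := by
      rw [integral_pos_iff_support_of_nonneg (fun x => (hBpos g x).le) (hBint g)]
      have hs : Function.support (B g) = Set.univ := Set.eq_univ_of_forall fun x => (hBpos g x).ne'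
      rw [hs, measure_univ]
      exact zero_lt_one
    rw [h0] at h1
    exact hpos.ne h1
  -- E of the "row sum" function
  have hEA : E (fun x => ∑ g ∈ f.support, f g * B g x)
      = fun x => ∑ g ∈ f.support, f g * E (B g) x := by
    have h1 : (fun x => ∑ g ∈ f.support, f g * B g x) = ∑ g ∈ f.support, f g • B g := by
      funext x
      rw [Finset.sum_apply]
      rfl
    rw [h1, map_sum]
    rw [Finset.sum_congr rfl fun g _ => map_smul E (f g) (B g)]
    funext x
    rw [Finset.sum_apply]
    rfl
  have hEAbd : ∀ᵐ x ∂μ, |∑ g ∈ f.support, f g * E (B g) x| ≤ KE.toReal := by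
    have hle : eLpNormEssSup (E (fun x => ∑ g ∈ f.support, f g * B g x)) μ ≤ KE := by
      rw [hKE, ← eLpNorm_exponent_top]
      exact hEinfty _
    filter_upwards [ae_le_eLpNormEssSup
      (f := E (fun x => ∑ g ∈ f.support, f g * B g x)) (μ := μ)] with x hx
    have h3 := ENNReal.toReal_mono hKEne (hx.trans hle)
    rw [toReal_enorm, Real.norm_eq_abs] at h3
    simpa only [hEA] using h3
  have hEχint : ∀ (n : ℕ) (g : Γ), Integrable (fun x => E (B g) x * min (v x ^ 2) (n : ℝ)) μ := by
    intro n g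
    have h := Integrable.bdd_mul (hEBint g) (hχmeas n).aestronglyMeasurable
      (c := (n : ℝ)) (ae_of_all _ fun x => by
        rw [Real.norm_eq_abs, abs_of_nonneg (hχ0 n x)]; exact min_le_right _ _)
    have heq : (fun x => E (B g) x * min (v x ^ 2) (n:ℝ))
        = fun x => min (v x ^ 2) (n:ℝ) * E (B g) x := by funext x; ring
    rw [heq]
    exact h
  have hIg : ∀ (n : ℕ) (g : Γ),
      Integrable (fun x => B g x * min (v (g⁻¹ • x) ^ 2) (n : ℝ)) μ := by
    intro n g
    refine integrable_of_bounds
      ((hBmeas g).mul (((hvg g).pow_const 2).min measurable_const)).aestronglyMeasurable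
      (D := C g * n)
      (fun x => mul_nonneg (hBpos g x).le (le_min (sq_nonneg _) (Nat.cast_nonneg n)))
      (fun x => mul_le_mul (hBle g x) (min_le_right _ _)
        (le_min (sq_nonneg _) (Nat.cast_nonneg n)) ((hBpos g x).le.trans (hBle g x)))
  -- key finite-level bound
  have hkey : ∀ n : ℕ,
      ∑ g ∈ f.support, f g * ∫ x, B g x * min (v (g⁻¹ • x) ^ 2) (n : ℝ) ∂μ ≤
        KE.toReal * ∫ x, v x ^ 2 ∂μ := by
    intro n
    have e1 : ∑ g ∈ f.support, f g * ∫ x, B g x * min (v (g⁻¹ • x) ^ 2) (n : ℝ) ∂μ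
        = ∫ x, ∑ g ∈ f.support, f g * (E (B g) x * min (v x ^ 2) (n : ℝ)) ∂μ := by
      rw [integral_finset_sum _ (fun g _ => (hEχint n g).const_mul (f g))]
      refine Finset.sum_congr rfl fun g hg => ?_
      have h : ∫ x, E (B g) x * min (v x ^ 2) (n:ℝ) ∂μ
          = ∫ x, B g x * min (v (g⁻¹ • x) ^ 2) (n:ℝ) ∂μ := hconf g _ (hχmeas n) (hχ2 n)
      rw [← h]
      exact (integral_const_mul _ _).symm
    have e2 : (fun x => ∑ g ∈ f.support, f g * (E (B g) x * min (v x ^ 2) (n : ℝ)))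
        = fun x => (∑ g ∈ f.support, f g * E (B g) x) * min (v x ^ 2) (n : ℝ) := by
      funext x
      rw [Finset.sum_mul]
      exact Finset.sum_congr rfl fun g _ => (mul_assoc _ _ _).symm
    rw [e1]
    calc ∫ x, ∑ g ∈ f.support, f g * (E (B g) x * min (v x ^ 2) (n : ℝ)) ∂μ
        ≤ ∫ x, KE.toReal * min (v x ^ 2) (n : ℝ) ∂μ := by
          refine integral_mono_ae ?_ (((hχ2 n).integrable (by norm_num)).const_mul _) ?_
          · have := integrable_finset_sum (μ := μ) f.support
              (fun g _ => (hEχint n g).const_mul (f g))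
            simpa only [e2] using this
          · filter_upwards [hEAbd] with x hx
            have e3 : ∑ g ∈ f.support, f g * (E (B g) x * min (v x ^ 2) (n:ℝ))
                = (∑ g ∈ f.support, f g * E (B g) x) * min (v x ^ 2) (n:ℝ) := by
              rw [Finset.sum_mul]
              exact Finset.sum_congr rfl fun g _ => (mul_assoc _ _ _).symm
            rw [e3]
            exact mul_le_mul_of_nonneg_right (le_of_abs_le hx) (hχ0 n x)
      _ = KE.toReal * ∫ x, min (v x ^ 2) (n : ℝ) ∂μ := integral_const_mul _ _
      _ ≤ KE.toReal * ∫ x, v x ^ 2 ∂μ := by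
          refine mul_le_mul_of_nonneg_left ?_ ENNReal.toReal_nonneg
          exact integral_mono ((hχ2 n).integrable (by norm_num)) hv2.integrable_sq
            fun x => min_le_left _ _
  -- the conformal lintegral bound
  have hPe : ∫⁻ x, ENNReal.ofReal (∑ g ∈ f.support, f g * B g x * v (g⁻¹ • x) ^ 2) ∂μ ≤
      KE * ∫⁻ x, (‖v x‖₊ : ℝ≥0∞) ^ (2:ℝ) ∂μ := by
    have hsplit : ∫⁻ x, ENNReal.ofReal (∑ g ∈ f.support, f g * B g x * v (g⁻¹ • x) ^ 2) ∂μ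
        = ∑ g ∈ f.support, ∫⁻ x, ENNReal.ofReal (f g * B g x * v (g⁻¹ • x) ^ 2) ∂μ := by
      rw [← lintegral_finset_sum (f := fun g x => ENNReal.ofReal (f g * B g x * v (g⁻¹ • x) ^ 2)) _ (fun g _ =>
        (((measurable_const.mul (hBmeas g)).mul ((hvg g).pow_const 2)).ennreal_ofReal :
          Measurable fun x => ENNReal.ofReal (f g * B g x * v (g⁻¹ • x) ^ 2)))]
      exact lintegral_congr fun x => ENNReal.ofReal_sum_of_nonneg fun g _ =>
        mul_nonneg (mul_nonneg (hf g) (hBpos g x).le) (sq_nonneg _)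
    have hg1 : ∀ g : Γ, ∫⁻ x, ENNReal.ofReal (f g * B g x * v (g⁻¹ • x) ^ 2) ∂μ
        = ⨆ n : ℕ, ∫⁻ x, ENNReal.ofReal (f g * B g x * min (v (g⁻¹ • x) ^ 2) (n:ℝ)) ∂μ := by
      intro g
      rw [← lintegral_iSup (f := fun n x => ENNReal.ofReal (f g * B g x * min (v (g⁻¹ • x) ^ 2) (n:ℝ))) (fun n => (((measurable_const.mul (hBmeas g)).mul
          (((hvg g).pow_const 2).min measurable_const)).ennreal_ofReal :
          Measurable fun x => ENNReal.ofReal (f g * B g x * min (v (g⁻¹ • x) ^ 2) (n:ℝ))))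
        (fun n m hnm x => ENNReal.ofReal_le_ofReal (mul_le_mul_of_nonneg_left
          (min_le_min le_rfl (Nat.cast_le.2 hnm)) (mul_nonneg (hf g) (hBpos g x).le)))]
      refine lintegral_congr fun x => ?_
      refine le_antisymm ?_ (iSup_le fun n => ENNReal.ofReal_le_ofReal
        (mul_le_mul_of_nonneg_left (min_le_left _ _) (mul_nonneg (hf g) (hBpos g x).le)))
      refine le_iSup_of_le ⌈v (g⁻¹ • x) ^ 2⌉₊ (le_of_eq ?_)
      rw [min_eq_left (Nat.le_ceil _)]
    have hsum : ∑ g ∈ f.support, ∫⁻ x, ENNReal.ofReal (f g * B g x * v (g⁻¹ • x) ^ 2) ∂μ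
        = ⨆ n : ℕ, ∑ g ∈ f.support,
            ∫⁻ x, ENNReal.ofReal (f g * B g x * min (v (g⁻¹ • x) ^ 2) (n:ℝ)) ∂μ := by
      rw [Finset.sum_congr rfl fun g _ => hg1 g]
      exact ENNReal.finsetSum_iSup_of_monotone fun g n m hnm => lintegral_mono fun x =>
        ENNReal.ofReal_le_ofReal (mul_le_mul_of_nonneg_left
          (min_le_min le_rfl (Nat.cast_le.2 hnm)) (mul_nonneg (hf g) (hBpos g x).le))
    rw [hsplit, hsum]
    refine iSup_le fun n => ?_
    have e4 : ∀ g : Γ, ∫⁻ x, ENNReal.ofReal (f g * B g x * min (v (g⁻¹ • x) ^ 2) (n:ℝ)) ∂μ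
        = ENNReal.ofReal (f g * ∫ x, B g x * min (v (g⁻¹ • x) ^ 2) (n:ℝ) ∂μ) := by
      intro g
      have hint : Integrable (fun x => f g * B g x * min (v (g⁻¹ • x) ^ 2) (n:ℝ)) μ := by
        have h := (hIg n g).const_mul (f g)
        have heq : (fun x => f g * (B g x * min (v (g⁻¹ • x) ^ 2) (n:ℝ)))
            = fun x => f g * B g x * min (v (g⁻¹ • x) ^ 2) (n:ℝ) := by funext x; ring
        rwa [heq] at h
      rw [← ofReal_integral_eq_lintegral_ofReal hint (ae_of_all _ fun x =>
        mul_nonneg (mul_nonneg (hf g) (hBpos g x).le) (hχ0 n _))]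
      congr 1
      rw [← integral_const_mul]
      exact integral_congr_ae (ae_of_all _ fun x => by ring)
    calc ∑ g ∈ f.support, ∫⁻ x, ENNReal.ofReal (f g * B g x * min (v (g⁻¹ • x) ^ 2) (n:ℝ)) ∂μ
        = ENNReal.ofReal (∑ g ∈ f.support,
            f g * ∫ x, B g x * min (v (g⁻¹ • x) ^ 2) (n:ℝ) ∂μ) := by
          rw [Finset.sum_congr rfl fun g _ => e4 g]
          exact (ENNReal.ofReal_sum_of_nonneg fun g _ => mul_nonneg (hf g)
            (integral_nonneg fun x => mul_nonneg (hBpos g x).le (hχ0 n _))).symm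
      _ ≤ ENNReal.ofReal (KE.toReal * ∫ x, v x ^ 2 ∂μ) := ENNReal.ofReal_le_ofReal (hkey n)
      _ = KE * ENNReal.ofReal (∫ x, v x ^ 2 ∂μ) := by
          rw [ENNReal.ofReal_mul ENNReal.toReal_nonneg, ENNReal.ofReal_toReal hKEne]
      _ = KE * ∫⁻ x, (‖v x‖₊ : ℝ≥0∞) ^ (2:ℝ) ∂μ := by
          rw [ofReal_integral_eq_lintegral_ofReal hv2.integrable_sq
            (ae_of_all _ fun x => sq_nonneg _)]
          congr 1
          exact lintegral_congr fun x => ofReal_sq (v x)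
  -- the easy lintegral bound
  have hQe : ∫⁻ x, ENNReal.ofReal ((∑ g ∈ f.support, f g * B g x) * w x ^ 2) ∂μ ≤
      KE * ∫⁻ x, (‖w x‖₊ : ℝ≥0∞) ^ (2:ℝ) ∂μ := by
    have hbd : ∀ᵐ x ∂μ, ENNReal.ofReal ((∑ g ∈ f.support, f g * B g x) * w x ^ 2) ≤
        KE * (‖w x‖₊ : ℝ≥0∞) ^ (2:ℝ) := by
      filter_upwards [ae_le_eLpNormEssSup
        (f := fun x => ∑ g ∈ f.support, f g * B g x) (μ := μ)] with x hx
      rw [ENNReal.ofReal_mul (hA0 x), ofReal_sq]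
      refine mul_le_mul' ?_ le_rfl
      calc ENNReal.ofReal (∑ g ∈ f.support, f g * B g x)
          = (‖∑ g ∈ f.support, f g * B g x‖₊ : ℝ≥0∞) := (Real.enorm_eq_ofReal (hA0 x)).symm
        _ ≤ KE := by rw [hKE, eLpNorm_exponent_top]; exact hx
    calc ∫⁻ x, ENNReal.ofReal ((∑ g ∈ f.support, f g * B g x) * w x ^ 2) ∂μ
        ≤ ∫⁻ x, KE * (‖w x‖₊ : ℝ≥0∞) ^ (2:ℝ) ∂μ := lintegral_mono_ae hbd
      _ = KE * ∫⁻ x, (‖w x‖₊ : ℝ≥0∞) ^ (2:ℝ) ∂μ :=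
          lintegral_const_mul KE (hw.enorm.pow_const _)
  -- final assembly
  have hvN : eLpNorm v 2 μ = (∫⁻ x, (‖v x‖₊ : ℝ≥0∞) ^ (2:ℝ) ∂μ) ^ (1/2:ℝ) := by
    rw [eLpNorm_eq_lintegral_rpow_enorm_toReal (by norm_num : (2:ℝ≥0∞) ≠ 0) ENNReal.ofNat_ne_top]
    simp
    rfl
  have hwN : eLpNorm w 2 μ = (∫⁻ x, (‖w x‖₊ : ℝ≥0∞) ^ (2:ℝ) ∂μ) ^ (1/2:ℝ) := by
    rw [eLpNorm_eq_lintegral_rpow_enorm_toReal (by norm_num : (2:ℝ≥0∞) ≠ 0) ENNReal.ofNat_ne_top]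
    simp
    rfl
  have step1 : |∫ x, (∑ g ∈ f.support, f g * B g x * v (g⁻¹ • x)) * w x ∂μ| ≤
      (∫⁻ x, ENNReal.ofReal ‖(∑ g ∈ f.support, f g * B g x * v (g⁻¹ • x)) * w x‖ ∂μ).toReal := by
    rw [← Real.norm_eq_abs]
    exact norm_integral_le_lintegral_norm _
  have hFmeas : Measurable fun x => ENNReal.ofReal
      (Real.sqrt (∑ g ∈ f.support, f g * B g x * v (g⁻¹ • x) ^ 2)) :=
    (Real.continuous_sqrt.measurable.comp hPmeas).ennreal_ofReal
  have hGmeas : Measurable fun x => ENNReal.ofReal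
      (Real.sqrt ((∑ g ∈ f.support, f g * B g x) * w x ^ 2)) :=
    (Real.continuous_sqrt.measurable.comp (hAmeas.mul (hw.pow_const 2))).ennreal_ofReal
  have eF : ∀ P : ℝ, 0 ≤ P → (ENNReal.ofReal (Real.sqrt P)) ^ (2:ℝ) = ENNReal.ofReal P := by
    intro P hP
    rw [ENNReal.ofReal_rpow_of_nonneg (Real.sqrt_nonneg _) (by norm_num)]
    congr 1
    rw [show (2:ℝ) = ((2:ℕ):ℝ) by norm_num, Real.rpow_natCast, Real.sq_sqrt hP]
  have hP0 : ∀ x, 0 ≤ ∑ g ∈ f.support, f g * B g x * v (g⁻¹ • x) ^ 2 := fun x =>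
    Finset.sum_nonneg fun g _ => mul_nonneg (mul_nonneg (hf g) (hBpos g x).le) (sq_nonneg _)
  have hQ0 : ∀ x, 0 ≤ (∑ g ∈ f.support, f g * B g x) * w x ^ 2 := fun x =>
    mul_nonneg (hA0 x) (sq_nonneg _)
  have step2 : ∫⁻ x, ENNReal.ofReal ‖(∑ g ∈ f.support, f g * B g x * v (g⁻¹ • x)) * w x‖ ∂μ ≤
      (∫⁻ x, ENNReal.ofReal (∑ g ∈ f.support, f g * B g x * v (g⁻¹ • x) ^ 2) ∂μ) ^ (1/2:ℝ) *
      (∫⁻ x, ENNReal.ofReal ((∑ g ∈ f.support, f g * B g x) * w x ^ 2) ∂μ) ^ (1/2:ℝ) := by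
    have h1 : ∫⁻ x, ENNReal.ofReal ‖(∑ g ∈ f.support, f g * B g x * v (g⁻¹ • x)) * w x‖ ∂μ ≤
        ∫⁻ x, ENNReal.ofReal
            (Real.sqrt (∑ g ∈ f.support, f g * B g x * v (g⁻¹ • x) ^ 2)) *
          ENNReal.ofReal (Real.sqrt ((∑ g ∈ f.support, f g * B g x) * w x ^ 2)) ∂μ := by
      refine lintegral_mono fun x => ?_
      rw [Real.norm_eq_abs, ← ENNReal.ofReal_mul (Real.sqrt_nonneg _)]
      exact ENNReal.ofReal_le_ofReal (cs_aux f.support (fun g => f g * B g x)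
        (fun g => v (g⁻¹ • x)) (fun g _ => mul_nonneg (hf g) (hBpos g x).le) (w x))
    have h2 := ENNReal.lintegral_mul_le_Lp_mul_Lq μ
      Real.HolderConjugate.two_two
      hFmeas.aemeasurable hGmeas.aemeasurable
    simp only [Pi.mul_apply] at h2
    have h3 : (∫⁻ x, (ENNReal.ofReal
          (Real.sqrt (∑ g ∈ f.support, f g * B g x * v (g⁻¹ • x) ^ 2))) ^ (2:ℝ) ∂μ)
        = ∫⁻ x, ENNReal.ofReal (∑ g ∈ f.support, f g * B g x * v (g⁻¹ • x) ^ 2) ∂μ :=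
      lintegral_congr fun x => eF _ (hP0 x)
    have h4 : (∫⁻ x, (ENNReal.ofReal
          (Real.sqrt ((∑ g ∈ f.support, f g * B g x) * w x ^ 2))) ^ (2:ℝ) ∂μ)
        = ∫⁻ x, ENNReal.ofReal ((∑ g ∈ f.support, f g * B g x) * w x ^ 2) ∂μ :=
      lintegral_congr fun x => eF _ (hQ0 x)
    rw [← h3, ← h4]
    exact h1.trans h2
  have chain : ∫⁻ x, ENNReal.ofReal ‖(∑ g ∈ f.support, f g * B g x * v (g⁻¹ • x)) * w x‖ ∂μ ≤
      KE * (eLpNorm v 2 μ * eLpNorm w 2 μ) := by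
    refine step2.trans ?_
    calc (∫⁻ x, ENNReal.ofReal (∑ g ∈ f.support, f g * B g x * v (g⁻¹ • x) ^ 2) ∂μ) ^ (1/2:ℝ) *
        (∫⁻ x, ENNReal.ofReal ((∑ g ∈ f.support, f g * B g x) * w x ^ 2) ∂μ) ^ (1/2:ℝ)
        ≤ (KE * ∫⁻ x, (‖v x‖₊ : ℝ≥0∞) ^ (2:ℝ) ∂μ) ^ (1/2:ℝ) *
          (KE * ∫⁻ x, (‖w x‖₊ : ℝ≥0∞) ^ (2:ℝ) ∂μ) ^ (1/2:ℝ) :=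
        mul_le_mul' (ENNReal.rpow_le_rpow hPe (by norm_num))
          (ENNReal.rpow_le_rpow hQe (by norm_num))
      _ = (KE ^ (1/2:ℝ) * KE ^ (1/2:ℝ)) *
          ((∫⁻ x, (‖v x‖₊ : ℝ≥0∞) ^ (2:ℝ) ∂μ) ^ (1/2:ℝ) *
            (∫⁻ x, (‖w x‖₊ : ℝ≥0∞) ^ (2:ℝ) ∂μ) ^ (1/2:ℝ)) := by
        rw [ENNReal.mul_rpow_of_nonneg _ _ (by norm_num : (0:ℝ) ≤ 1/2),
          ENNReal.mul_rpow_of_nonneg _ _ (by norm_num : (0:ℝ) ≤ 1/2)]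
        ring
      _ = KE * (eLpNorm v 2 μ * eLpNorm w 2 μ) := by
        rw [hvN, hwN, ← ENNReal.rpow_add_of_nonneg (1/2) (1/2) (by norm_num) (by norm_num),
          show (1/2 + 1/2 : ℝ) = 1 by norm_num, ENNReal.rpow_one]
  refine step1.trans ?_
  have hne2 : KE * (eLpNorm v 2 μ * eLpNorm w 2 μ) ≠ ⊤ :=
    ENNReal.mul_ne_top hKEne (ENNReal.mul_ne_top hv2.2.ne hw2.2.ne)
  have hfin := ENNReal.toReal_mono hne2 chain
  rw [ENNReal.toReal_mul, ENNReal.toReal_mul] at hfin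
  exact hfin.trans (le_of_eq (by ring))

/-- Let `μ` be a quasi-invariant probability on the compactification
`X` of a hyperbolic group `Γ`, `s ∈ [1/2, 1]`, `π_s` the `s`-density representation
`π_s(g)ψ(x) = e^{-sδ b_x(g,e)} ψ(g⁻¹x)` (with `b` the Busemann cocycle), and `E` a
`(Γ,s,μ)`-conformal conditional expectation (`E ∘ π_s(g) = π_s*(g) ∘ E` on `L²(μ)`).
Then for every symmetric nonnegative finitely supported `f`,
`‖π_s(f)‖_{op, L²(μ)} ≤ ‖π_s(f)𝟏‖_{L^∞(μ)}`. -/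
theorem conformal_expectation_bound [Group.FG Γ] (M : InvMetric Γ)
    (hhyp : IsStronglyHyperbolic M) (hrg : IsRoughlyGeodesic M)
    (hne : 0 < growthExp M)
    {X : Type*} [TopologicalSpace X] [CompactSpace X] [MeasurableSpace X] [BorelSpace X]
    [MulAction Γ X] (hact : ∀ g : Γ, Continuous fun x : X => g • x)
    (μ : Measure X) [IsProbabilityMeasure μ]
    (hqi : ∀ g : Γ, μ.map (fun x => g • x) ≪ μ ∧ μ ≪ μ.map (fun x => g • x))
    (b : Γ → X → ℝ) (hbmeas : ∀ g, Measurable (b g))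
    (hbcoc : ∀ g h : Γ, ∀ x : X, b (g * h) x = b g x + b h (g⁻¹ • x))
    (hbus : ∀ g : Γ, ∀ x : X, |b g x| ≤ M.d g 1)
    (s : ℝ) (hs : 1 / 2 ≤ s) (hs1 : s ≤ 1)
    (E : (X → ℝ) →ₗ[ℝ] (X → ℝ))
    (hE1 : E (fun _ => 1) = fun _ => 1)
    (hEpos : ∀ ψ : X → ℝ, (∀ x, 0 ≤ ψ x) → ∀ x, 0 ≤ E ψ x)
    (hEinfty : ∀ ψ : X → ℝ, eLpNorm (E ψ) ⊤ μ ≤ eLpNorm ψ ⊤ μ)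
    (hEL2 : ∀ ψ : X → ℝ, eLpNorm (E ψ) 2 μ ≤ eLpNorm ψ 2 μ)
    (hconf : ∀ g : Γ, ∀ ψ χ : X → ℝ, Measurable ψ → Measurable χ →
      MemLp ψ 2 μ → MemLp χ 2 μ →
      ∫ x, E (fun y => Real.exp (-(s * growthExp M) * b g y) * ψ (g⁻¹ • y)) x * χ x ∂μ =
        ∫ x, E ψ x * (Real.exp (-(s * growthExp M) * b g x) * χ (g⁻¹ • x)) ∂μ)
    (f : Γ →₀ ℝ) (hf : ∀ g, 0 ≤ f g) (hsym : ∀ g : Γ, f g⁻¹ = f g)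
    (v w : X → ℝ) (hv : Measurable v) (hw : Measurable w)
    (hv2 : MemLp v 2 μ) (hw2 : MemLp w 2 μ) :
    |∫ x, (∑ g ∈ f.support,
        f g * Real.exp (-(s * growthExp M) * b g x) * v (g⁻¹ • x)) * w x ∂μ| ≤
      (eLpNorm (fun x => ∑ g ∈ f.support,
          f g * Real.exp (-(s * growthExp M) * b g x)) ⊤ μ).toReal *
        (eLpNorm v 2 μ).toReal * (eLpNorm w 2 μ).toReal := by
  have hc0 : 0 ≤ s * growthExp M := mul_nonneg (le_trans (by norm_num) hs) hne.le
  have hconf' : ∀ g : Γ, ∀ χ : X → ℝ, Measurable χ → MemLp χ 2 μ →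
      ∫ x, E (fun y => Real.exp (-(s * growthExp M) * b g y)) x * χ x ∂μ
        = ∫ x, Real.exp (-(s * growthExp M) * b g x) * χ (g⁻¹ • x) ∂μ := by
    intro g χ hm h2
    have h := hconf g (fun _ => (1:ℝ)) χ measurable_const hm (memLp_const 1) h2
    simp only [mul_one] at h
    rw [hE1] at h
    simpa using h
  exact aux_bound (fun g => (hact g).measurable) μ
    (fun g x => Real.exp (-(s * growthExp M) * b g x))
    (fun g => Real.measurable_exp.comp (measurable_const.mul (hbmeas g)))
    (fun g x => Real.exp_pos _)
    (fun g => Real.exp ((s * growthExp M) * M.d g 1))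
    (fun g x => Real.exp_le_exp.2 (by
      calc -(s * growthExp M) * b g x = (s * growthExp M) * (-(b g x)) := by ring
        _ ≤ (s * growthExp M) * |b g x| :=
            mul_le_mul_of_nonneg_left (neg_le_abs _) hc0
        _ ≤ (s * growthExp M) * M.d g 1 :=
            mul_le_mul_of_nonneg_left (hbus g x) hc0))
    E hEinfty hconf' f hf v w hv hw hv2 hw2
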